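/- Suppose e_i(ε) > 0 and E_{ii}(ε) ≥ e_i(ε) > 0 for ε ∈ (0, ε₀], e_i(ε) has a pivotal Laurent (m⁻, m⁺)-expansion with leading coefficient b > 0, and E_{ii}(ε) has a pivotal Laurent (M⁻, M⁺)-expansion with leading coefficient B > 0. Then M⁻ ≤ m⁻, and the ratio π_i(ε) = e_i(ε)/E_{ii}(ε) has a pivotal Laurent (n⁻, n⁺)-expansion with n⁻ = m⁻ - M⁻ ≥ 0, n⁺ = min(m⁺ - M⁻, m⁻ + M⁺ - 2M⁻), and positive leading coefficient b/B; in particular π_i(ε) → b/B > 0 as ε → 0⁺ if n⁻ = 0, and π_i(ε) → 0 if n⁻ > 0. -/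

import Mathlib

open Filter Set

/-- A Laurent `(h,k)`-asymptotic expansion of `A` at `0⁺`:
`(A ε - ∑_{l=h}^{k} a_l ε^l)/ε^k → 0` as `ε → 0⁺`. -/
def IsLaurentExpansion (A : ℝ → ℝ) (h k : ℤ) (a : ℤ → ℝ) : Prop :=
  h ≤ k ∧
    Tendsto (fun ε : ℝ => (A ε - ∑ l ∈ Finset.Icc h k, a l * ε ^ l) / ε ^ k)
      (nhdsWithin 0 (Set.Ioi 0)) (nhds 0)


lemma aux_ev_pos : ∀ᶠ ε in nhdsWithin (0:ℝ) (Ioi 0), 0 < ε := eventually_mem_nhdsWithin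

lemma aux_zpow_lim (n : ℤ) (hn : 0 ≤ n) :
    Tendsto (fun ε : ℝ => ε ^ n) (nhdsWithin 0 (Ioi 0)) (nhds (if n = 0 then 1 else 0)) := by
  have h1 : Tendsto (fun ε : ℝ => ε ^ n.toNat) (nhdsWithin 0 (Ioi 0)) (nhds ((0:ℝ) ^ n.toNat)) :=
    ((continuous_pow n.toNat).tendsto 0).mono_left nhdsWithin_le_nhds
  have h2 : (0:ℝ) ^ n.toNat = if n = 0 then 1 else 0 := by
    rcases eq_or_lt_of_le hn with h | h
    · simp [← h]
    · rw [zero_pow (by omega), if_neg (by omega)]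
  rw [← h2]
  refine h1.congr' ?_
  filter_upwards [aux_ev_pos] with ε hε
  rw [← zpow_natCast, Int.toNat_of_nonneg hn]

lemma aux_div_shift (R : ℝ → ℝ) (j k : ℤ) (hjk : j ≤ k)
    (h : Tendsto (fun ε => R ε / ε ^ k) (nhdsWithin (0:ℝ) (Ioi 0)) (nhds 0)) :
    Tendsto (fun ε => R ε / ε ^ j) (nhdsWithin (0:ℝ) (Ioi 0)) (nhds 0) := by
  have := h.mul (aux_zpow_lim (k - j) (by omega))
  rw [zero_mul] at this
  refine this.congr' ?_
  filter_upwards [aux_ev_pos] with ε hε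
  have hε' : ε ≠ 0 := ne_of_gt hε
  field_simp
  rw [mul_assoc, ← zpow_add₀ hε', sub_add_cancel]

lemma aux_norm (A : ℝ → ℝ) (h k : ℤ) (a : ℤ → ℝ)
    (h1 : h ≤ k)
    (h2 : Tendsto (fun ε : ℝ => (A ε - ∑ l ∈ Finset.Icc h k, a l * ε ^ l) / ε ^ k)
      (nhdsWithin 0 (Set.Ioi 0)) (nhds 0)) :
    Tendsto (fun ε => A ε / ε ^ h) (nhdsWithin (0:ℝ) (Ioi 0)) (nhds (a h)) := by
  have hrem : Tendsto (fun ε : ℝ => (A ε - ∑ l ∈ Finset.Icc h k, a l * ε ^ l) / ε ^ h)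
      (nhdsWithin 0 (Ioi 0)) (nhds 0) := aux_div_shift _ h k h1 h2
  have hsum : Tendsto (fun ε : ℝ => (∑ l ∈ Finset.Icc h k, a l * ε ^ l) / ε ^ h)
      (nhdsWithin 0 (Ioi 0)) (nhds (a h)) := by
    have key : ∀ l ∈ Finset.Icc h k, Tendsto (fun ε : ℝ => a l * ε ^ (l - h))
        (nhdsWithin (0:ℝ) (Ioi 0)) (nhds (if l = h then a l else 0)) := by
      intro l hl
      simp only [Finset.mem_Icc] at hl
      have := (aux_zpow_lim (l - h) (by omega)).const_mul (a l)
      rcases eq_or_ne l h with rfl | hlh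
      · simpa using this
      · simpa [hlh, show l - h ≠ 0 by omega] using this
    have := tendsto_finset_sum _ key
    rw [Finset.sum_ite_eq' (Finset.Icc h k) h a, if_pos (Finset.mem_Icc.mpr ⟨le_refl h, h1⟩)] at this
    refine this.congr' ?_
    filter_upwards [aux_ev_pos] with ε hε
    rw [Finset.sum_div]
    refine Finset.sum_congr rfl fun l hl => ?_
    rw [mul_div_assoc, ← zpow_sub₀ (ne_of_gt hε)]
  have := hrem.add hsum
  rw [zero_add] at this
  refine this.congr (fun ε => by ring)

lemma aux_sum_Icc (f : ℤ → ℝ) (a b : ℤ) (hab : a ≤ b) :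
    ∑ l ∈ Finset.Icc a b, f l = ∑ j ∈ Finset.range ((b - a).toNat + 1), f (a + j) := by
  refine Finset.sum_nbij' (fun l => (l - a).toNat) (fun j => a + j) ?_ ?_ ?_ ?_ ?_
  · intro l hl; simp only [Finset.mem_Icc] at hl; simp only [Finset.mem_range]; omega
  · intro j hj; simp only [Finset.mem_range] at hj; simp only [Finset.mem_Icc]; omega
  · intro l hl; simp only [Finset.mem_Icc] at hl; omega
  · intro j hj; simp only [Finset.mem_range] at hj; omega
  · intro l hl; simp only [Finset.mem_Icc] at hl
    congr 1; omega

open Polynomial in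
lemma aux_formal_div (p q : ℝ[X]) (hq : q.coeff 0 ≠ 0) (N : ℕ) :
    ∃ t r2 : ℝ[X], t.natDegree < N + 1 ∧ t.coeff 0 = p.coeff 0 / q.coeff 0 ∧
      p = t * q + Polynomial.X ^ (N + 1) * r2 := by
  have hq' : PowerSeries.constantCoeff (q : PowerSeries ℝ) ≠ 0 := by
    rwa [Polynomial.constantCoeff_coe]
  set u : PowerSeries ℝ := (p : PowerSeries ℝ) * (q : PowerSeries ℝ)⁻¹ with hu_def
  have hu : u * (q : PowerSeries ℝ) = (p : PowerSeries ℝ) := by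
    rw [hu_def, mul_assoc, PowerSeries.inv_mul_cancel _ hq', mul_one]
  set t := PowerSeries.trunc (N + 1) u with ht_def
  have hdeg : t.natDegree < N + 1 := by
    rcases eq_or_ne t 0 with h | h
    · simp [h]
    · exact (Polynomial.natDegree_lt_iff_degree_lt h).mpr (PowerSeries.degree_trunc_lt u (N+1))
  have ht0 : t.coeff 0 = p.coeff 0 / q.coeff 0 := by
    rw [ht_def, PowerSeries.coeff_trunc, if_pos (Nat.succ_pos N), hu_def, PowerSeries.coeff_zero_eq_constantCoeff,
      map_mul, PowerSeries.constantCoeff_inv, Polynomial.constantCoeff_coe, Polynomial.constantCoeff_coe,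
      div_eq_mul_inv]
  have hcoeff : ∀ d < N + 1, (p - t * q).coeff d = 0 := by
    intro d hd
    have : ((p - t * q : ℝ[X]) : PowerSeries ℝ) = (u - (t : PowerSeries ℝ)) * (q : PowerSeries ℝ) := by
      push_cast
      rw [sub_mul, hu]
    have h2 := congrArg (PowerSeries.coeff d) this
    rw [Polynomial.coeff_coe, PowerSeries.coeff_mul] at h2
    rw [h2]
    refine Finset.sum_eq_zero fun ij hij => ?_
    rw [Finset.HasAntidiagonal.mem_antidiagonal] at hij
    have hij1 : ij.1 < N + 1 := by omega
    rw [map_sub, Polynomial.coeff_coe, ht_def, PowerSeries.coeff_trunc, if_pos hij1, sub_self, zero_mul]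
  obtain ⟨r2, hr2⟩ := (Polynomial.X_pow_dvd_iff).mpr hcoeff
  exact ⟨t, r2, hdeg, ht0, by rw [← hr2]; ring⟩

set_option maxHeartbeats 1000000 in
/-- Asymptotic expansion for the stationary probability `π_i(ε) = e_i(ε)/E_{ii}(ε)`:
if `0 < e_i(ε) ≤ E_{ii}(ε)` and both have pivotal Laurent expansions with positive
leading coefficients `b` and `B`, then `M⁻ ≤ m⁻` and the ratio has a pivotal Laurent
`(m⁻ - M⁻, min(m⁺ - M⁻, m⁻ + M⁺ - 2M⁻))`-expansion with positive leading coefficient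
`b/B`; the ratio tends to `b/B` if `m⁻ - M⁻ = 0` and to `0` if `m⁻ - M⁻ > 0`. -/
theorem stationary_probability_expansion (ε₀ : ℝ) (hε₀ : 0 < ε₀) (e E : ℝ → ℝ)
    (m₁ m₂ M₁ M₂ : ℤ) (bc Bc : ℤ → ℝ)
    (hpos : ∀ ε ∈ Set.Ioc (0:ℝ) ε₀, 0 < e ε ∧ e ε ≤ E ε)
    (he : IsLaurentExpansion e m₁ m₂ bc) (hbpos : 0 < bc m₁)
    (hE : IsLaurentExpansion E M₁ M₂ Bc) (hBpos : 0 < Bc M₁) :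
    M₁ ≤ m₁ ∧
    ∃ c : ℤ → ℝ,
      IsLaurentExpansion (fun ε => e ε / E ε)
        (m₁ - M₁) (min (m₂ - M₁) (m₁ + M₂ - 2 * M₁)) c ∧
      c (m₁ - M₁) = bc m₁ / Bc M₁ ∧ 0 < c (m₁ - M₁) ∧ 0 ≤ m₁ - M₁ ∧
      (m₁ - M₁ = 0 →
        Tendsto (fun ε => e ε / E ε) (nhdsWithin 0 (Set.Ioi 0))
          (nhds (bc m₁ / Bc M₁))) ∧
      (0 < m₁ - M₁ →
        Tendsto (fun ε => e ε / E ε) (nhdsWithin 0 (Set.Ioi 0)) (nhds 0)) := by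
  classical
  obtain ⟨hm, he2⟩ := he
  obtain ⟨hM, hE2⟩ := hE
  have he_lim := aux_norm e m₁ m₂ bc hm he2
  have hE_lim := aux_norm E M₁ M₂ Bc hM hE2
  have ev_Ioc : ∀ᶠ ε in nhdsWithin (0:ℝ) (Ioi 0), ε ∈ Ioc (0:ℝ) ε₀ := by
    have h1 : ∀ᶠ ε in nhds (0:ℝ), ε < ε₀ := eventually_lt_nhds hε₀
    filter_upwards [aux_ev_pos, h1.filter_mono nhdsWithin_le_nhds] with ε h2 h3
    exact ⟨h2, le_of_lt h3⟩
  -- `M₁ ≤ m₁`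
  have hMm : M₁ ≤ m₁ := by
    by_contra hcon
    push_neg at hcon
    have h1 : ∀ᶠ ε in nhdsWithin (0:ℝ) (Ioi 0),
        e ε / ε ^ m₁ ≤ (E ε / ε ^ M₁) * ε ^ (M₁ - m₁) := by
      filter_upwards [ev_Ioc] with ε hε
      have hεp : 0 < ε := hε.1
      have hεne : ε ≠ 0 := ne_of_gt hεp
      have hRHS : (E ε / ε ^ M₁) * ε ^ (M₁ - m₁) = E ε / ε ^ m₁ := by
        rw [zpow_sub₀ hεne, div_mul_div_comm, mul_comm (E ε),
          mul_div_mul_left _ _ (zpow_ne_zero M₁ hεne)]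
      rw [hRHS]
      gcongr
      exact (hpos ε hε).2
    have h2 : Tendsto (fun ε : ℝ => (E ε / ε ^ M₁) * ε ^ (M₁ - m₁))
        (nhdsWithin (0:ℝ) (Ioi 0)) (nhds 0) := by
      have := hE_lim.mul (aux_zpow_lim (M₁ - m₁) (by omega))
      simpa [show M₁ - m₁ ≠ 0 by omega] using this
    have := le_of_tendsto_of_tendsto he_lim h2 h1
    linarith
  refine ⟨hMm, ?_⟩
  -- sizes
  set K₁ : ℕ := (m₂ - m₁).toNat with hK₁
  set K₂ : ℕ := (M₂ - M₁).toNat with hK₂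
  set N : ℕ := min K₁ K₂ with hN
  set n₁ : ℤ := m₁ - M₁ with hn₁
  set n₂ : ℤ := min (m₂ - M₁) (m₁ + M₂ - 2 * M₁) with hn₂
  have hK₁' : (K₁ : ℤ) = m₂ - m₁ := by omega
  have hK₂' : (K₂ : ℤ) = M₂ - M₁ := by omega
  have hNn : n₂ = n₁ + (N : ℤ) := by omega
  have hn₁₂ : n₁ ≤ n₂ := by omega
  -- polynomials
  set p : Polynomial ℝ := ∑ j ∈ Finset.range (K₁ + 1), Polynomial.C (bc (m₁ + j)) * Polynomial.X ^ j with hp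
  set q : Polynomial ℝ := ∑ j ∈ Finset.range (K₂ + 1), Polynomial.C (Bc (M₁ + j)) * Polynomial.X ^ j with hq
  have hp0 : p.coeff 0 = bc m₁ := by
    simp [hp, Polynomial.finset_sum_coeff, Polynomial.coeff_C_mul, Polynomial.coeff_X_pow,
      Finset.sum_ite_eq']
  have hq0 : q.coeff 0 = Bc M₁ := by
    simp [hq, Polynomial.finset_sum_coeff, Polynomial.coeff_C_mul, Polynomial.coeff_X_pow,
      Finset.sum_ite_eq']
  have hpev : ∀ ε : ℝ, p.eval ε = ∑ j ∈ Finset.range (K₁ + 1), bc (m₁ + j) * ε ^ j := by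
    intro ε; simp [hp, Polynomial.eval_finset_sum]
  have hqev : ∀ ε : ℝ, q.eval ε = ∑ j ∈ Finset.range (K₂ + 1), Bc (M₁ + j) * ε ^ j := by
    intro ε; simp [hq, Polynomial.eval_finset_sum]
  obtain ⟨t, r2, hdeg, ht0, hpq⟩ := aux_formal_div p q (by rw [hq0]; exact ne_of_gt hBpos) N
  set c : ℤ → ℝ := fun l => t.coeff (l - n₁).toNat with hc
  have hcn₁ : c n₁ = bc m₁ / Bc M₁ := by
    simp only [hc, sub_self, Int.toNat_zero, ht0, hp0, hq0]
  -- the sum identities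
  have he_id : ∀ ε : ℝ, ε ≠ 0 → ∑ l ∈ Finset.Icc m₁ m₂, bc l * ε ^ l = ε ^ m₁ * p.eval ε := by
    intro ε hεne
    rw [aux_sum_Icc _ _ _ hm, hpev, Finset.mul_sum]
    refine Finset.sum_congr (by rw [← hK₁]) fun j hj => ?_
    rw [zpow_add₀ hεne, zpow_natCast]; ring
  have hE_id : ∀ ε : ℝ, ε ≠ 0 → ∑ l ∈ Finset.Icc M₁ M₂, Bc l * ε ^ l = ε ^ M₁ * q.eval ε := by
    intro ε hεne
    rw [aux_sum_Icc _ _ _ hM, hqev, Finset.mul_sum]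
    refine Finset.sum_congr (by rw [← hK₂]) fun j hj => ?_
    rw [zpow_add₀ hεne, zpow_natCast]; ring
  have hdeg' : t.natDegree < (n₂ - n₁).toNat + 1 := by
    have : (n₂ - n₁).toNat = N := by omega
    omega
  have hsum : ∀ ε : ℝ, ε ≠ 0 → ∑ l ∈ Finset.Icc n₁ n₂, c l * ε ^ l = ε ^ n₁ * t.eval ε := by
    intro ε hεne
    rw [aux_sum_Icc _ _ _ hn₁₂, Polynomial.eval_eq_sum_range' hdeg' ε, Finset.mul_sum]
    refine Finset.sum_congr rfl fun j hj => ?_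
    have : c (n₁ + j) = t.coeff j := by simp [hc]
    rw [this, zpow_add₀ hεne, zpow_natCast]; ring
  -- the main limit
  have main : Tendsto (fun ε : ℝ =>
      ((fun ε => e ε / E ε) ε - ∑ l ∈ Finset.Icc n₁ n₂, c l * ε ^ l) / ε ^ n₂)
      (nhdsWithin 0 (Set.Ioi 0)) (nhds 0) := by
    have lim1 : Tendsto (fun ε : ℝ => ε * r2.eval ε) (nhdsWithin 0 (Ioi 0))
        (nhds 0) := by
      have : Tendsto (fun ε : ℝ => ε * r2.eval ε) (nhds 0) (nhds (0 * r2.eval 0)) :=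
        (continuous_id.mul r2.continuous).tendsto 0
      rw [zero_mul] at this
      exact this.mono_left nhdsWithin_le_nhds
    have lim2 : Tendsto (fun ε : ℝ => (e ε - ∑ l ∈ Finset.Icc m₁ m₂, bc l * ε ^ l) / ε ^ (m₁ + (N:ℤ)))
        (nhdsWithin 0 (Ioi 0)) (nhds 0) := aux_div_shift _ _ m₂ (by omega) he2
    have lim3' : Tendsto (fun ε : ℝ => (E ε - ∑ l ∈ Finset.Icc M₁ M₂, Bc l * ε ^ l) / ε ^ (M₁ + (N:ℤ)))
        (nhdsWithin 0 (Ioi 0)) (nhds 0) := aux_div_shift _ _ M₂ (by omega) hE2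
    have lim3 : Tendsto (fun ε : ℝ =>
        t.eval ε * ((E ε - ∑ l ∈ Finset.Icc M₁ M₂, Bc l * ε ^ l) / ε ^ (M₁ + (N:ℤ))))
        (nhdsWithin 0 (Ioi 0)) (nhds 0) := by
      have ht : Tendsto (fun ε : ℝ => t.eval ε) (nhdsWithin 0 (Ioi 0)) (nhds (t.eval 0)) :=
        (t.continuous.tendsto 0).mono_left nhdsWithin_le_nhds
      simpa using ht.mul lim3'
    have lim4 : Tendsto (fun ε : ℝ => ε ^ M₁ / E ε) (nhdsWithin 0 (Ioi 0))
        (nhds (Bc M₁)⁻¹) := by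
      have := hE_lim.inv₀ (ne_of_gt hBpos)
      simpa [inv_div] using this
    have combined := ((lim1.add lim2).sub lim3).mul lim4
    rw [show ((0:ℝ) + 0 - 0) * (Bc M₁)⁻¹ = 0 by ring] at combined
    refine combined.congr' ?_
    filter_upwards [ev_Ioc] with ε hε
    have hεp : 0 < ε := hε.1
    have hεne : ε ≠ 0 := ne_of_gt hεp
    have hEp : 0 < E ε := lt_of_lt_of_le (hpos ε hε).1 (hpos ε hε).2
    have hEne : E ε ≠ 0 := ne_of_gt hEp
    have hpq' : p.eval ε = t.eval ε * q.eval ε + ε ^ (N + 1) * r2.eval ε := by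
      rw [hpq]; simp
    have hz1 : ε ^ m₁ = ε ^ n₁ * ε ^ M₁ := by
      rw [← zpow_add₀ hεne]; congr 1; omega
    have hz2 : ε ^ (m₁ + (N:ℤ)) = ε ^ n₁ * ε ^ M₁ * ε ^ N := by
      rw [← zpow_natCast ε N, ← zpow_add₀ hεne, ← zpow_add₀ hεne]; congr 1; omega
    have hz3 : ε ^ (M₁ + (N:ℤ)) = ε ^ M₁ * ε ^ N := by
      rw [← zpow_natCast ε N, ← zpow_add₀ hεne]
    have hz4 : ε ^ n₂ = ε ^ n₁ * ε ^ N := by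
      rw [← zpow_natCast ε N, ← zpow_add₀ hεne]; congr 1
    have hG : ε ^ n₁ ≠ 0 := zpow_ne_zero _ hεne
    have hA : ε ^ M₁ ≠ 0 := zpow_ne_zero _ hεne
    have hP : (ε:ℝ) ^ N ≠ 0 := pow_ne_zero _ hεne
    rw [hsum ε hεne, he_id ε hεne, hE_id ε hεne, hpq', hz1, hz2, hz3, hz4, pow_succ]
    field_simp
    ring
  refine ⟨c, ⟨hn₁₂, main⟩, hcn₁, by rw [hcn₁]; positivity, by omega, ?_, ?_⟩
  · intro h0
    have hr := aux_norm _ n₁ n₂ c hn₁₂ main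
    rw [← hcn₁]
    refine hr.congr' ?_
    filter_upwards [aux_ev_pos] with ε hε
    rw [show n₁ = 0 from h0, zpow_zero, div_one]
  · intro h0
    have hr := aux_norm _ n₁ n₂ c hn₁₂ main
    have := hr.mul (aux_zpow_lim n₁ (le_of_lt h0))
    rw [if_neg (by omega), mul_zero] at this
    refine this.congr' ?_
    filter_upwards [aux_ev_pos] with ε hε
    exact div_mul_cancel₀ _ (zpow_ne_zero _ (ne_of_gt hε))
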